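/- Let X ⊆ ℝⁿ be a nonempty closed convex set, f₁ : ℝⁿ → ℝ convex, f₂ : ℝⁿ → ℝ convex and differentiable with L-Lipschitz continuous gradient, and F = f₁ + f₂ with nonempty optimal solution set X* over X and optimal value F*. Assume the local error bound property holds. Suppose (x^r) ⊆ X is generated by an APS method with error constant κ > 0 and stepsizes 0 < α̲ ≤ α_r ≤ ᾱ, and the sufficient decrease condition F(x^r) − F(x^{r+1}) ≥ c₁‖x^{r+1} − x^r‖² holds for some c₁ > 0 and all r. Then the objective values converge Q-linearly to F*: there exist θ > 0 and an index R such that F(x^{r+1}) − F* ≤ θ·(F(x^r) − F(x^{r+1})), and hence F(x^{r+1}) − F* ≤ (θ/(1+θ))·(F(x^r) − F*), for all r ≥ R. -/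

import Mathlib

open Set

/-- `p` is the proximal point `prox_φ(x, X)`: the minimizer over `y ∈ X` of
`φ(y) + (1/2)‖y − x‖²`. -/
def IsProx {E : Type*} [NormedAddCommGroup E] [InnerProductSpace ℝ E]
    (φ : E → ℝ) (X : Set E) (x p : E) : Prop :=
  p ∈ X ∧ ∀ y ∈ X, φ p + (1 / 2) * ‖p - x‖ ^ 2 ≤ φ y + (1 / 2) * ‖y - x‖ ^ 2

open RealInnerProductSpace

variable {E : Type*} [NormedAddCommGroup E] [InnerProductSpace ℝ E]

lemma expand_sq (v w : E) (t : ℝ) :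
    ‖v + t • w‖ ^ 2 = ‖v‖ ^ 2 + 2 * t * ⟪v, w⟫ + t ^ 2 * ‖w‖ ^ 2 := by
  rw [@norm_add_sq_real, real_inner_smul_right, norm_smul, Real.norm_eq_abs, mul_pow, sq_abs]
  ring

lemma three_point (q u a : E) :
    ‖q - a‖ ^ 2 + ‖u - q‖ ^ 2 - ‖u - a‖ ^ 2 = 2 * ⟪q - u, q - a⟫ := by
  have h : u - a = (u - q) + (q - a) := by abel
  rw [h, @norm_add_sq_real]
  have h2 : ⟪u - q, q - a⟫ = -⟪q - u, q - a⟫ := by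
    rw [← inner_neg_left]; congr 1; abel
  linarith

lemma isProx_strong {φ : E → ℝ} {X : Set E} (hφ : ConvexOn ℝ univ φ) (hX : Convex ℝ X)
    {x pt : E} (h : IsProx φ X x pt) {y : E} (hy : y ∈ X) :
    φ pt + (1 / 2) * ‖pt - x‖ ^ 2 + (1 / 2) * ‖y - pt‖ ^ 2 ≤ φ y + (1 / 2) * ‖y - x‖ ^ 2 := by
  have key : ∀ t : ℝ, 0 < t → t < 1 →
      φ pt + (1 / 2) * ‖pt - x‖ ^ 2 + (1 / 2) * ‖y - pt‖ ^ 2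
        ≤ φ y + (1 / 2) * ‖y - x‖ ^ 2 + (1 / 2) * t * ‖y - pt‖ ^ 2 := by
    intro t ht0 ht1
    have hpoint : (1 - t) • pt + t • y = pt + t • (y - pt) := by
      rw [sub_smul, one_smul, smul_sub]; abel
    have hz : pt + t • (y - pt) ∈ X := by
      rw [← hpoint]
      exact hX h.1 hy (by linarith) ht0.le (by ring)
    have hmin := h.2 _ hz
    have hexp : ‖pt + t • (y - pt) - x‖ ^ 2
        = ‖pt - x‖ ^ 2 + 2 * t * ⟪pt - x, y - pt⟫ + t ^ 2 * ‖y - pt‖ ^ 2 := by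
      rw [show pt + t • (y - pt) - x = (pt - x) + t • (y - pt) by abel, expand_sq]
    have hC : ‖y - x‖ ^ 2
        = ‖pt - x‖ ^ 2 + 2 * ⟪pt - x, y - pt⟫ + ‖y - pt‖ ^ 2 := by
      rw [show y - x = (pt - x) + (1 : ℝ) • (y - pt) by rw [one_smul]; abel, expand_sq]
      ring
    have hcv : φ (pt + t • (y - pt)) ≤ (1 - t) * φ pt + t * φ y := by
      have h3 := hφ.2 (mem_univ pt) (mem_univ y) (by linarith : (0:ℝ) ≤ 1 - t) ht0.le (by ring)
      rw [hpoint] at h3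
      simpa [smul_eq_mul] using h3
    rw [hexp] at hmin
    have h4 : t * φ pt ≤ t * (φ y + ⟪pt - x, y - pt⟫ + t * ‖y - pt‖ ^ 2 / 2) := by
      nlinarith [hmin, hcv]
    have h5 : φ pt ≤ φ y + ⟪pt - x, y - pt⟫ + t * ‖y - pt‖ ^ 2 / 2 :=
      le_of_mul_le_mul_left h4 ht0
    linarith
  have hcont : Filter.Tendsto
      (fun t : ℝ => φ y + (1 / 2) * ‖y - x‖ ^ 2 + (1 / 2) * t * ‖y - pt‖ ^ 2)
      (nhdsWithin 0 (Set.Ioi 0)) (nhds (φ y + (1 / 2) * ‖y - x‖ ^ 2)) := by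
    have hc : Continuous fun t : ℝ => φ y + (1 / 2) * ‖y - x‖ ^ 2 + (1 / 2) * t * ‖y - pt‖ ^ 2 := by
      fun_prop
    have h0 := (hc.tendsto 0).mono_left (nhdsWithin_le_nhds (s := Set.Ioi (0:ℝ)))
    simpa using h0
  refine ge_of_tendsto hcont ?_
  filter_upwards [Ioo_mem_nhdsGT_of_mem (by constructor <;> norm_num : (0:ℝ) ∈ Ico (0:ℝ) 1)]
    with t ht
  exact key t ht.1 ht.2

lemma grad_ineq [CompleteSpace E] {f : E → ℝ} (hf : ConvexOn ℝ univ f) {G z : E}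
    (hg : HasGradientAt f G z) (y : E) : ⟪G, y - z⟫ ≤ f y - f z := by
  by_cases hyz : y = z
  · simp [hyz]
  set v := y - z with hv
  have hψ : ConvexOn ℝ univ fun t : ℝ => f (z + t • v) := by
    refine ⟨convex_univ, ?_⟩
    intro s _ t _ a b ha hb hab
    have hb' : b = 1 - a := by linarith
    subst hb'
    have key : z + (a * s + (1 - a) * t) • v = a • (z + s • v) + (1 - a) • (z + t • v) := by
      module
    simp only [smul_eq_mul]
    rw [key]
    simpa [smul_eq_mul] using
      hf.2 (mem_univ (z + s • v)) (mem_univ (z + t • v)) ha hb hab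
  have h1 : HasDerivAt (fun t : ℝ => z + t • v) v 0 := by
    simpa using ((hasDerivAt_id (0 : ℝ)).smul_const v).const_add z
  have h2 : HasDerivAt (fun t : ℝ => f (z + t • v)) ⟪G, v⟫ 0 := by
    have hfd : HasFDerivAt f (InnerProductSpace.toDual ℝ E G) ((fun t : ℝ => z + t • v) 0) := by
      simpa using hg.hasFDerivAt
    simpa [Function.comp_def] using hfd.comp_hasDerivAt 0 h1
  have hle := hψ.le_slope_of_hasDerivAt (mem_univ (0 : ℝ)) (mem_univ (1 : ℝ)) zero_lt_one h2
  rw [slope_def_field] at hle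
  simp only [one_smul, zero_smul, add_zero] at hle
  have hzv : z + v = y := by rw [hv]; abel
  rw [hzv] at hle
  simpa using hle

set_option maxHeartbeats 1000000

/-- Q-linear convergence of the objective values of APS methods under the local error
bound property and the sufficient decrease condition.  Here `p z = prox_{f₁}(z − ∇f₂(z))`,
so that the residual is `ψ(z) = ‖z − p z‖`. -/
theorem aps_qlinear_objective {n : ℕ}
    (X : Set (EuclideanSpace ℝ (Fin n)))
    (hXne : X.Nonempty) (hXcl : IsClosed X) (hXcv : Convex ℝ X)
    (f₁ f₂ : EuclideanSpace ℝ (Fin n) → ℝ)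
    (hf₁ : ConvexOn ℝ univ f₁) (hf₂ : ConvexOn ℝ univ f₂)
    (g : EuclideanSpace ℝ (Fin n) → EuclideanSpace ℝ (Fin n))
    (hg : ∀ z, HasGradientAt f₂ (g z) z)
    (L : ℝ) (hL : 0 ≤ L) (hLip : ∀ z w, ‖g z - g w‖ ≤ L * ‖z - w‖)
    (F : EuclideanSpace ℝ (Fin n) → ℝ) (hF : ∀ z, F z = f₁ z + f₂ z)
    (Xstar : Set (EuclideanSpace ℝ (Fin n)))
    (hXstar : Xstar = {y | y ∈ X ∧ ∀ z ∈ X, F y ≤ F z})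
    (hXstarne : Xstar.Nonempty)
    (Fstar : ℝ) (hFstar : ∀ y ∈ Xstar, F y = Fstar)
    -- the residual map `p z = prox_{f₁}(z − ∇f₂(z))`
    (p : EuclideanSpace ℝ (Fin n) → EuclideanSpace ℝ (Fin n))
    (hp : ∀ z, IsProx f₁ X (z - g z) (p z))
    -- local error bound property
    (hEB : ∀ ν : ℝ, sInf (F '' X) ≤ ν → ∃ δ > (0 : ℝ), ∃ τ > (0 : ℝ),
      ∀ z ∈ X, F z ≤ ν → ‖z - p z‖ ≤ δ →
        Metric.infDist z (closure Xstar) ≤ τ * ‖z - p z‖)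
    (κ : ℝ) (hκ : 0 < κ)
    (α : ℕ → ℝ) (αlo αhi : ℝ) (hαlo : 0 < αlo)
    (hα₁ : ∀ r, αlo ≤ α r) (hα₂ : ∀ r, α r ≤ αhi)
    (x e : ℕ → EuclideanSpace ℝ (Fin n)) (hxX : ∀ r, x r ∈ X)
    (hAPS : ∀ r, IsProx (fun y => α r * f₁ y) X
      (x r - α r • (g (x r) + e r)) (x (r + 1)))
    (herr : ∀ r, ‖e r‖ ≤ κ * ‖x (r + 1) - x r‖)
    (c₁ : ℝ) (hc₁ : 0 < c₁)
    (hdec : ∀ r, F (x r) - F (x (r + 1)) ≥ c₁ * ‖x (r + 1) - x r‖ ^ 2) :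
    ∃ θ > (0 : ℝ), ∃ R : ℕ, ∀ r, R ≤ r →
      F (x (r + 1)) - Fstar ≤ θ * (F (x r) - F (x (r + 1))) ∧
      F (x (r + 1)) - Fstar ≤ θ / (1 + θ) * (F (x r) - Fstar) := by
  have hαpos : ∀ r, 0 < α r := fun r => hαlo.trans_le (hα₁ r)
  have hαhi : 0 < αhi := hαlo.trans_le ((hα₁ 0).trans (hα₂ 0))
  obtain ⟨y₀, hy₀⟩ := id hXstarne
  have hy₀' : y₀ ∈ X ∧ ∀ z ∈ X, F y₀ ≤ F z := by rw [hXstar] at hy₀; exact hy₀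
  have hFstarle : ∀ z ∈ X, Fstar ≤ F z := fun z hz => (hFstar y₀ hy₀) ▸ hy₀'.2 z hz
  have hFlow : ∀ r, Fstar ≤ F (x r) := fun r => hFstarle _ (hxX r)
  have hmono : ∀ r, F (x (r + 1)) ≤ F (x r) := fun r => by
    nlinarith [hdec r, sq_nonneg ‖x (r + 1) - x r‖]
  have hanti : Antitone fun r => F (x r) := antitone_nat_of_succ_le hmono
  -- continuity of F
  have hf₂c : Continuous f₂ := continuous_iff_continuousAt.mpr fun z =>
    (hg z).hasFDerivAt.differentiableAt.continuousAt
  have hf₁c : Continuous f₁ := by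
    have h := ConvexOn.continuousOn isOpen_univ hf₁
    rw [continuousOn_univ] at h
    exact h
  have hFc : Continuous F := by
    have hFeq : F = fun z => f₁ z + f₂ z := funext hF
    rw [hFeq]; exact hf₁c.add hf₂c
  have hXscl : closure Xstar ⊆ X :=
    closure_minimal (by rw [hXstar]; exact fun y hy => hy.1) hXcl
  have hXsF : ∀ y ∈ closure Xstar, F y = Fstar := fun y hy =>
    closure_minimal (fun w hw => hFstar w hw)
      (isClosed_eq hFc continuous_const) hy
  -- error bound at level ν = F (x 0)
  have hsinf : sInf (F '' X) ≤ F (x 0) :=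
    csInf_le ⟨Fstar, by rintro v ⟨z, hz, rfl⟩; exact hFstarle z hz⟩ ⟨x 0, hxX 0, rfl⟩
  obtain ⟨δ, hδ, τ, hτ, hEB'⟩ := hEB (F (x 0)) hsinf
  have hφconv : ∀ r, ConvexOn ℝ univ fun y => α r * f₁ y := by
    intro r
    simpa only [smul_eq_mul] using hf₁.smul (hαpos r).le
  -- residual bound
  set C₂ : ℝ := (αlo + (1 + αhi + 2 * αhi * κ)) / αlo with hC₂def
  have hC₂1 : 1 ≤ C₂ := by
    rw [hC₂def, le_div_iff₀ hαlo]; nlinarith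
  have hC₂pos : 0 < C₂ := lt_of_lt_of_le one_pos hC₂1
  have hres : ∀ r, ‖x r - p (x r)‖ ≤ C₂ * ‖x (r + 1) - x r‖ := by
    intro r
    have hq := (hp (x r)).1
    have hI1 := isProx_strong hf₁ hXcv (hp (x r)) (hxX (r + 1))
    have hI2 := isProx_strong (hφconv r) hXcv (hAPS r) hq
    have hE := herr r
    have t1 := three_point (p (x r)) (x (r + 1)) (x r - g (x r))
    have t2 := three_point (x (r + 1)) (p (x r)) (x r - α r • (g (x r) + e r))
    have j1 : ⟪p (x r) - x (r + 1), p (x r) - (x r - g (x r))⟫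
        ≤ f₁ (x (r + 1)) - f₁ (p (x r)) := by linarith
    have j2 : ⟪x (r + 1) - p (x r), x (r + 1) - (x r - α r • (g (x r) + e r))⟫
        ≤ α r * (f₁ (p (x r)) - f₁ (x (r + 1))) := by linarith
    have j1' := mul_le_mul_of_nonneg_left j1 (hαpos r).le
    have hsum : α r * ⟪p (x r) - x (r + 1), p (x r) - (x r - g (x r))⟫
        + ⟪x (r + 1) - p (x r), x (r + 1) - (x r - α r • (g (x r) + e r))⟫ ≤ 0 := by
      linarith
    rw [show p (x r) - (x r - g (x r)) = (p (x r) - x r) + g (x r) by abel,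
        show p (x r) - x (r + 1) = (p (x r) - x r) - (x (r + 1) - x r) by abel,
        show x (r + 1) - p (x r) = (x (r + 1) - x r) - (p (x r) - x r) by abel,
        show x (r + 1) - (x r - α r • (g (x r) + e r))
          = (x (r + 1) - x r) + α r • (g (x r) + e r) by abel] at hsum
    rw [norm_sub_rev]
    set S := p (x r) - x r with hS
    set D := x (r + 1) - x r with hD
    set G := g (x r) with hG
    set Ee := e r with hEe
    have inner1 : ⟪S - D, S + G⟫ = ‖S‖ ^ 2 + ⟪S, G⟫ - ⟪S, D⟫ - ⟪D, G⟫ := by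
      simp only [inner_sub_left, inner_add_right, real_inner_self_eq_norm_sq]
      rw [real_inner_comm D S]; ring
    have inner2 : ⟪D - S, D + α r • (G + Ee)⟫
        = ‖D‖ ^ 2 + α r * ⟪D, G⟫ + α r * ⟪D, Ee⟫
          - ⟪S, D⟫ - α r * ⟪S, G⟫ - α r * ⟪S, Ee⟫ := by
      simp only [inner_sub_left, inner_add_right, real_inner_smul_right,
        real_inner_self_eq_norm_sq]
      ring
    rw [inner1, inner2] at hsum
    have n1 : ⟪S, D⟫ ≤ ‖S‖ * ‖D‖ := real_inner_le_norm S D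
    have n2 : ⟪S, Ee⟫ ≤ ‖S‖ * ‖Ee‖ := real_inner_le_norm S Ee
    have n3 : -⟪D, Ee⟫ ≤ ‖D‖ * ‖Ee‖ := by
      have h := abs_real_inner_le_norm D Ee
      have h2 := neg_abs_le (⟪D, Ee⟫)
      linarith
    have hSnn := norm_nonneg S
    have hDnn := norm_nonneg D
    have hEnn := norm_nonneg Ee
    have c1 : α r * ‖S‖ ^ 2 + ‖D‖ ^ 2
        ≤ (1 + α r) * ⟪S, D⟫ + α r * ⟪S, Ee⟫ + α r * -⟪D, Ee⟫ := by linarith [hsum]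
    have c2 : (1 + α r) * ⟪S, D⟫ ≤ (1 + α r) * (‖S‖ * ‖D‖) :=
      mul_le_mul_of_nonneg_left n1 (by linarith [hαpos r])
    have c3 : α r * ⟪S, Ee⟫ ≤ α r * (‖S‖ * ‖Ee‖) :=
      mul_le_mul_of_nonneg_left n2 (hαpos r).le
    have c4 : α r * -⟪D, Ee⟫ ≤ α r * (‖D‖ * ‖Ee‖) :=
      mul_le_mul_of_nonneg_left n3 (hαpos r).le
    have c6 : α r * (‖S‖ * ‖Ee‖) ≤ α r * (‖S‖ * (κ * ‖D‖)) :=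
      mul_le_mul_of_nonneg_left (mul_le_mul_of_nonneg_left hE hSnn) (hαpos r).le
    have c7 : α r * (‖D‖ * ‖Ee‖) ≤ α r * (‖D‖ * (κ * ‖D‖)) :=
      mul_le_mul_of_nonneg_left (mul_le_mul_of_nonneg_left hE hDnn) (hαpos r).le
    have c8 : αlo * ‖S‖ ^ 2 ≤ α r * ‖S‖ ^ 2 :=
      mul_le_mul_of_nonneg_right (hα₁ r) (sq_nonneg _)
    have c9 : (1 + α r) * (‖S‖ * ‖D‖) ≤ (1 + αhi) * (‖S‖ * ‖D‖) :=
      mul_le_mul_of_nonneg_right (by linarith [hα₂ r]) (mul_nonneg hSnn hDnn)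
    have c10 : α r * (‖S‖ * (κ * ‖D‖)) ≤ αhi * (‖S‖ * (κ * ‖D‖)) :=
      mul_le_mul_of_nonneg_right (hα₂ r) (mul_nonneg hSnn (mul_nonneg hκ.le hDnn))
    have c11 : α r * (‖D‖ * (κ * ‖D‖)) ≤ αhi * (‖D‖ * (κ * ‖D‖)) :=
      mul_le_mul_of_nonneg_right (hα₂ r) (mul_nonneg hDnn (mul_nonneg hκ.le hDnn))
    have hkey : αlo * ‖S‖ ^ 2
        ≤ (1 + αhi + αhi * κ) * (‖S‖ * ‖D‖) + αhi * κ * (‖D‖ * ‖D‖) := by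
      linarith only [c1, c2, c3, c4, c6, c7, c8, c9, c10, c11, sq_nonneg ‖D‖]
    rcases le_or_gt ‖S‖ ‖D‖ with hc | hc
    · have hcc := mul_nonneg (sub_nonneg.mpr hC₂1) hDnn
      linarith only [hc, hcc]
    · rcases eq_or_lt_of_le hSnn with h0 | hSpos
      · rw [← h0]; positivity
      have hDS : ‖D‖ * ‖D‖ ≤ ‖S‖ * ‖D‖ :=
        mul_le_mul_of_nonneg_right hc.le hDnn
      have m8 := mul_le_mul_of_nonneg_left hDS (mul_nonneg hαhi.le hκ.le)
      have h7 : αlo * ‖S‖ * ‖S‖ ≤ ((1 + αhi + 2 * αhi * κ) * ‖D‖) * ‖S‖ := by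
        linarith only [hkey, m8]
      have h8 : αlo * ‖S‖ ≤ (1 + αhi + 2 * αhi * κ) * ‖D‖ :=
        le_of_mul_le_mul_right h7 hSpos
      have h10 : αlo * ‖S‖ ≤ αlo * (C₂ * ‖D‖) := by
        have hcc : αlo * (C₂ * ‖D‖) = (αlo + (1 + αhi + 2 * αhi * κ)) * ‖D‖ := by
          rw [hC₂def]; field_simp
        rw [hcc]
        linarith [h8, mul_nonneg hαlo.le hDnn]
      exact le_of_mul_le_mul_left h10 hαlo
  -- choose R
  have hbdd : BddBelow (Set.range fun r => F (x r)) :=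
    ⟨Fstar, by rintro v ⟨r, rfl⟩; exact hFlow r⟩
  have h1 : Filter.Tendsto (fun r => F (x r)) Filter.atTop (nhds (⨅ r, F (x r))) :=
    tendsto_atTop_ciInf hanti hbdd
  have h2 : Filter.Tendsto (fun r => F (x (r + 1))) Filter.atTop (nhds (⨅ r, F (x r))) :=
    h1.comp (Filter.tendsto_add_atTop_nat 1)
  have hlim : Filter.Tendsto (fun r => F (x r) - F (x (r + 1))) Filter.atTop (nhds 0) := by
    simpa using h1.sub h2
  have hεpos : (0 : ℝ) < c₁ * (δ / C₂) ^ 2 :=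
    mul_pos hc₁ (pow_pos (div_pos hδ hC₂pos) 2)
  obtain ⟨R, hR⟩ := Filter.eventually_atTop.mp (hlim.eventually (Iio_mem_nhds hεpos))
  have hsmall : ∀ r, R ≤ r → ‖x r - p (x r)‖ ≤ δ := by
    intro r hr
    have h1' : F (x r) - F (x (r + 1)) < c₁ * (δ / C₂) ^ 2 := hR r hr
    have h2' := hdec r
    have hq : 0 < δ / C₂ := div_pos hδ hC₂pos
    have hsq : ‖x (r + 1) - x r‖ ^ 2 < (δ / C₂) ^ 2 := by
      nlinarith [h1', h2', hc₁]
    have hd : ‖x (r + 1) - x r‖ < δ / C₂ := by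
      nlinarith [hsq, hq, norm_nonneg (x (r + 1) - x r)]
    calc ‖x r - p (x r)‖ ≤ C₂ * ‖x (r + 1) - x r‖ := hres r
      _ ≤ C₂ * (δ / C₂) := mul_le_mul_of_nonneg_left hd.le hC₂pos.le
      _ = δ := by field_simp
  -- the constant
  set θ : ℝ := (1 + αhi * L + αhi * κ) * (τ * C₂ + 1) / (αlo * c₁) with hθdef
  have hαL : 0 ≤ αhi * L := mul_nonneg hαhi.le hL
  have hακ : 0 < αhi * κ := mul_pos hαhi hκ
  have hτC : 0 < τ * C₂ := mul_pos hτ hC₂pos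
  have hθ : 0 < θ := by
    apply div_pos
    · exact mul_pos (by linarith) (by linarith)
    · exact mul_pos hαlo hc₁
  refine ⟨θ, hθ, R, fun r hr => ?_⟩
  -- main estimate
  obtain ⟨xbar, hxbarm, hxbare⟩ :=
    isClosed_closure.exists_infDist_eq_dist (hXstarne.closure) (x r)
  have hdistb : ‖x r - xbar‖ ≤ τ * ‖x r - p (x r)‖ := by
    have h1' := hEB' (x r) (hxX r) (hanti (Nat.zero_le r)) (hsmall r hr)
    rw [hxbare, dist_eq_norm] at h1'
    exact h1'
  have hxbarX : xbar ∈ X := hXscl hxbarm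
  have hFxbar : F xbar = Fstar := hXsF xbar hxbarm
  -- f₁ inequality from the APS prox step, test point xbar
  have hI := isProx_strong (hφconv r) hXcv (hAPS r) hxbarX
  have t3 := three_point (x (r + 1)) xbar (x r - α r • (g (x r) + e r))
  have j3 : ⟪x (r + 1) - xbar, x (r + 1) - (x r - α r • (g (x r) + e r))⟫
      ≤ α r * (f₁ xbar - f₁ (x (r + 1))) := by linarith
  -- f₂ inequality
  have j4 : ⟪g (x (r + 1)), xbar - x (r + 1)⟫ ≤ f₂ xbar - f₂ (x (r + 1)) :=
    grad_ineq hf₂ (hg (x (r + 1))) xbar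
  have j4' : α r * (f₂ (x (r + 1)) - f₂ xbar)
      ≤ α r * ⟪x (r + 1) - xbar, g (x (r + 1))⟫ := by
    apply mul_le_mul_of_nonneg_left _ (hαpos r).le
    have hcomm : ⟪g (x (r + 1)), xbar - x (r + 1)⟫
        = -⟪x (r + 1) - xbar, g (x (r + 1))⟫ := by
      rw [real_inner_comm, ← inner_neg_left]; congr 1; abel
    linarith [j4, hcomm.symm.le]
  -- expand the inner product
  have hexp : ⟪x (r + 1) - xbar, x (r + 1) - (x r - α r • (g (x r) + e r))⟫
      = ⟪x (r + 1) - xbar, x (r + 1) - x r⟫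
        + α r * ⟪x (r + 1) - xbar, g (x r)⟫
        + α r * ⟪x (r + 1) - xbar, e r⟫ := by
    rw [show x (r + 1) - (x r - α r • (g (x r) + e r))
        = (x (r + 1) - x r) + α r • (g (x r) + e r) by abel]
    simp only [inner_add_right, real_inner_smul_right]
    ring
  -- scalar bounds
  set W := ‖x (r + 1) - xbar‖ with hW
  set Dn := ‖x (r + 1) - x r‖ with hDn
  have hWnn : 0 ≤ W := norm_nonneg _
  have hDnn : 0 ≤ Dn := norm_nonneg _
  have b1 : -⟪x (r + 1) - xbar, x (r + 1) - x r⟫ ≤ W * Dn := by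
    have h := abs_real_inner_le_norm (x (r + 1) - xbar) (x (r + 1) - x r)
    have h2 := neg_abs_le (⟪x (r + 1) - xbar, x (r + 1) - x r⟫)
    linarith
  have b2 : -⟪x (r + 1) - xbar, g (x r) - g (x (r + 1))⟫ ≤ W * (L * Dn) := by
    have h := abs_real_inner_le_norm (x (r + 1) - xbar) (g (x r) - g (x (r + 1)))
    have h2 := neg_abs_le (⟪x (r + 1) - xbar, g (x r) - g (x (r + 1))⟫)
    have h3 : ‖g (x r) - g (x (r + 1))‖ ≤ L * Dn := by
      have := hLip (x r) (x (r + 1))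
      rwa [norm_sub_rev (x r) (x (r + 1))] at this
    nlinarith
  have b3 : -⟪x (r + 1) - xbar, e r⟫ ≤ W * (κ * Dn) := by
    have h := abs_real_inner_le_norm (x (r + 1) - xbar) (e r)
    have h2 := neg_abs_le (⟪x (r + 1) - xbar, e r⟫)
    have h3 := herr r
    nlinarith [norm_nonneg (e r)]
  have hsplit : ⟪x (r + 1) - xbar, g (x r)⟫ - ⟪x (r + 1) - xbar, g (x (r + 1))⟫
      = ⟪x (r + 1) - xbar, g (x r) - g (x (r + 1))⟫ := by
    rw [inner_sub_right]
  have b2' := mul_le_mul_of_nonneg_left b2 (hαpos r).le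
  have b3' := mul_le_mul_of_nonneg_left b3 (hαpos r).le
  -- combine: α r * (F u - Fstar) ≤ W*Dn + α r * (W*(L*Dn)) + α r * (W*(κ*Dn))
  have hcomb : α r * (F (x (r + 1)) - Fstar)
      ≤ W * Dn + α r * (W * (L * Dn)) + α r * (W * (κ * Dn)) := by
    have hFu' := congrArg (fun z => α r * z) (hF (x (r + 1)))
    have hFxb' := congrArg (fun z => α r * z) (hF xbar)
    have hFxbar' := congrArg (fun z => α r * z) hFxbar
    have hsplit' := congrArg (fun z => α r * z) hsplit
    have hj3 := j3
    rw [hexp] at hj3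
    linarith only [hj3, j4', b1, b2', b3', hsplit', hFu', hFxb', hFxbar']
  -- replace α r by bounds
  have step2 : α r * (F (x (r + 1)) - Fstar)
      ≤ (1 + αhi * L + αhi * κ) * (W * Dn) := by
    have k1 : α r * (W * (L * Dn)) ≤ αhi * (W * (L * Dn)) :=
      mul_le_mul_of_nonneg_right (hα₂ r) (mul_nonneg hWnn (mul_nonneg hL hDnn))
    have k2 : α r * (W * (κ * Dn)) ≤ αhi * (W * (κ * Dn)) :=
      mul_le_mul_of_nonneg_right (hα₂ r) (mul_nonneg hWnn (mul_nonneg hκ.le hDnn))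
    linarith only [hcomb, k1, k2]
  have step1 : αlo * (F (x (r + 1)) - Fstar) ≤ α r * (F (x (r + 1)) - Fstar) :=
    mul_le_mul_of_nonneg_right (hα₁ r) (by linarith [hFlow (r + 1)])
  have hWb : W ≤ (τ * C₂ + 1) * Dn := by
    have t1' : W ≤ ‖x r - xbar‖ + Dn := by
      rw [hW, hDn, show x (r + 1) - xbar = (x (r + 1) - x r) + (x r - xbar) by abel]
      calc ‖(x (r + 1) - x r) + (x r - xbar)‖
          ≤ ‖x (r + 1) - x r‖ + ‖x r - xbar‖ := norm_add_le _ _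
        _ = ‖x r - xbar‖ + ‖x (r + 1) - x r‖ := by ring
    have t2' : ‖x r - xbar‖ ≤ τ * (C₂ * Dn) :=
      hdistb.trans (mul_le_mul_of_nonneg_left (hres r) hτ.le)
    linarith only [t1', t2']
  have step3 : αlo * (F (x (r + 1)) - Fstar)
      ≤ ((1 + αhi * L + αhi * κ) * (τ * C₂ + 1)) * (Dn * Dn) := by
    have hpos : (0 : ℝ) < 1 + αhi * L + αhi * κ := by linarith
    have s3 : W * Dn ≤ ((τ * C₂ + 1) * Dn) * Dn :=
      mul_le_mul_of_nonneg_right hWb hDnn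
    have s4 := mul_le_mul_of_nonneg_left s3 hpos.le
    linarith only [step1, step2, s4]
  -- conclude
  have hKnn : (0 : ℝ) ≤ (1 + αhi * L + αhi * κ) * (τ * C₂ + 1) :=
    mul_nonneg (by linarith) (by linarith)
  have hθK : θ * (αlo * c₁) = (1 + αhi * L + αhi * κ) * (τ * C₂ + 1) := by
    rw [hθdef]; field_simp
  have hdecr := hdec r
  have hmain1 : F (x (r + 1)) - Fstar ≤ θ * (F (x r) - F (x (r + 1))) := by
    have h6 : (αlo * c₁) * (F (x (r + 1)) - Fstar)
        ≤ (αlo * c₁) * (θ * (F (x r) - F (x (r + 1)))) := by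
      have s1 : c₁ * (αlo * (F (x (r + 1)) - Fstar))
          ≤ c₁ * (((1 + αhi * L + αhi * κ) * (τ * C₂ + 1)) * (Dn * Dn)) :=
        mul_le_mul_of_nonneg_left step3 hc₁.le
      have s2 : ((1 + αhi * L + αhi * κ) * (τ * C₂ + 1)) * (c₁ * Dn ^ 2)
          ≤ ((1 + αhi * L + αhi * κ) * (τ * C₂ + 1)) * (F (x r) - F (x (r + 1))) :=
        mul_le_mul_of_nonneg_left (by rw [hDn]; exact hdecr) hKnn
      have hθK' := congrArg (fun z => z * (F (x r) - F (x (r + 1)))) hθK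
      linarith only [s1, s2, hθK']
    exact le_of_mul_le_mul_left h6 (mul_pos hαlo hc₁)
  refine ⟨hmain1, ?_⟩
  have hθ1 : (0 : ℝ) < 1 + θ := by linarith
  rw [div_mul_eq_mul_div, le_div_iff₀ hθ1]
  have hnn : 0 ≤ θ * (F (x (r + 1)) - Fstar) :=
    mul_nonneg hθ.le (sub_nonneg.mpr (hFlow (r + 1)))
  linarith only [hmain1, hnn]
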